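/- arXiv:2206.00543 — 2 statements merged into one kernel-verified Lean document; each statement's English description precedes it below -/
import Mathlib

section
/- Define e(z) = exp(2πi z) for z ∈ ℂ. Then the partial products h_N(z) = (1 − e(z)) ∏_{n=1}^N (1 − e(n i + z))(1 − e(n i − z)) converge uniformly on every compact subset of ℂ to an entire function 𝔥, and the zero set of 𝔥 is exactly the Gaussian integer lattice ℤ + iℤ, every zero being simple: 𝔥(ζ) = 0 and 𝔥′(ζ) ≠ 0 for every ζ ∈ ℤ + iℤ, while 𝔥(z) ≠ 0 for every z ∉ ℤ + iℤ. -/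
open scoped Real

/-- `e(z) = exp(2πi z)`. -/
noncomputable def ecf (z : ℂ) : ℂ := Complex.exp (2 * (Real.pi : ℂ) * Complex.I * z)

open Complex Finset Filter

lemma ecf_add (a b : ℂ) : ecf (a + b) = ecf a * ecf b := by
  simp [ecf, mul_add, Complex.exp_add]

lemma ecf_ne_zero (z : ℂ) : ecf z ≠ 0 := Complex.exp_ne_zero _

lemma ecf_zero : ecf 0 = 1 := by simp [ecf]

lemma ecf_int (k : ℤ) : ecf (k : ℂ) = 1 := by
  rw [ecf, show 2 * (Real.pi : ℂ) * Complex.I * (k : ℂ) = (k : ℂ) * (2 * Real.pi * Complex.I) by ring]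
  exact Complex.exp_int_mul_two_pi_mul_I k

lemma two_pi_I_ne_zero : (2 * (Real.pi : ℂ) * Complex.I) ≠ 0 := by
  simp [Real.pi_ne_zero, Complex.I_ne_zero, Complex.ofReal_ne_zero]

lemma ecf_eq_one_iff (w : ℂ) : ecf w = 1 ↔ ∃ k : ℤ, w = (k : ℂ) := by
  rw [ecf, Complex.exp_eq_one_iff]
  constructor
  · rintro ⟨n, hn⟩
    refine ⟨n, ?_⟩
    have := hn
    rw [show (n : ℂ) * (2 * ↑Real.pi * Complex.I) = 2 * ↑Real.pi * Complex.I * (n:ℂ) by ring] at this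
    exact mul_left_cancel₀ _root_.two_pi_I_ne_zero this
  · rintro ⟨k, rfl⟩
    exact ⟨k, by ring⟩

lemma norm_ecf (z : ℂ) : ‖ecf z‖ = Real.exp (-(2 * Real.pi * z.im)) := by
  rw [ecf, Complex.norm_exp]
  congr 1
  simp [Complex.mul_re, Complex.mul_im]

noncomputable def qq : ℝ := Real.exp (-(2 * Real.pi))

lemma qq_pos : 0 < qq := Real.exp_pos _
lemma qq_lt_one : qq < 1 := Real.exp_lt_one_iff.mpr (by nlinarith [Real.pi_pos])

lemma norm_ecf_le {z : ℂ} {R : ℝ} (hz : ‖z‖ ≤ R) : ‖ecf z‖ ≤ Real.exp (2 * Real.pi * R) := by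
  rw [norm_ecf]
  apply Real.exp_le_exp.mpr
  have h1 : |z.im| ≤ R := le_trans (Complex.abs_im_le_norm z) hz
  nlinarith [Real.pi_pos, abs_le.mp h1]

lemma norm_ecf_vert (n : ℕ) (z : ℂ) : ‖ecf ((n : ℂ) * Complex.I + z)‖ = qq ^ n * ‖ecf z‖ := by
  rw [ecf_add, norm_mul, norm_ecf]
  congr 1
  rw [qq, ← Real.exp_nat_mul]
  congr 1
  simp
  ring

noncomputable def Ffac (n : ℕ) (z : ℂ) : ℂ :=
  (1 - ecf ((n : ℂ) * Complex.I + z)) * (1 - ecf ((n : ℂ) * Complex.I - z))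

noncomputable def Qp (N : ℕ) (z : ℂ) : ℂ := ∏ n ∈ Finset.Icc 1 N, Ffac n z

/-- The partial products
`h_N(z) = (1 − e(z)) ∏_{n=1}^N (1 − e(n i + z))(1 − e(n i − z))`. -/
noncomputable def partialProd (N : ℕ) (z : ℂ) : ℂ :=
  (1 - ecf z) *
    ∏ n ∈ Finset.Icc 1 N, ((1 - ecf ((n : ℂ) * Complex.I + z)) * (1 - ecf ((n : ℂ) * Complex.I - z)))

lemma partialProd_eq (N : ℕ) (z : ℂ) : partialProd N z = (1 - ecf z) * Qp N z := rfl

lemma norm_u_le {z : ℂ} {R : ℝ} (hz : ‖z‖ ≤ R) (n : ℕ) :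
    ‖ecf ((n : ℂ) * Complex.I + z)‖ ≤ qq ^ n * Real.exp (2 * Real.pi * R) := by
  rw [norm_ecf_vert]
  exact mul_le_mul_of_nonneg_left (norm_ecf_le hz) (pow_pos qq_pos n).le

lemma norm_v_le {z : ℂ} {R : ℝ} (hz : ‖z‖ ≤ R) (n : ℕ) :
    ‖ecf ((n : ℂ) * Complex.I - z)‖ ≤ qq ^ n * Real.exp (2 * Real.pi * R) := by
  have : (n : ℂ) * Complex.I - z = (n : ℂ) * Complex.I + (-z) := by ring
  rw [this, norm_ecf_vert]
  exact mul_le_mul_of_nonneg_left (norm_ecf_le (by simpa using hz)) (pow_pos qq_pos n).le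

lemma Ffac_sub_one_norm {z : ℂ} {R : ℝ} (hR : 0 ≤ R) (hz : ‖z‖ ≤ R) {n : ℕ} (hn : 1 ≤ n) :
    ‖Ffac n z - 1‖ ≤ 3 * Real.exp (4 * Real.pi * R) * qq ^ n := by
  set u := ecf ((n : ℂ) * Complex.I + z) with hu
  set v := ecf ((n : ℂ) * Complex.I - z) with hv
  have hub := norm_u_le hz n
  have hvb := norm_v_le hz n
  have h1 : Ffac n z - 1 = u * v - u - v := by rw [Ffac]; ring
  rw [h1]
  have h2 : ‖u * v - u - v‖ ≤ ‖u‖ * ‖v‖ + ‖u‖ + ‖v‖ := by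
    calc ‖u * v - u - v‖ ≤ ‖u * v - u‖ + ‖v‖ := norm_sub_le _ _
    _ ≤ ‖u * v‖ + ‖u‖ + ‖v‖ := by gcongr; exact norm_sub_le _ _
    _ = ‖u‖ * ‖v‖ + ‖u‖ + ‖v‖ := by rw [norm_mul]
  refine h2.trans ?_
  have hE : Real.exp (2 * Real.pi * R) * Real.exp (2 * Real.pi * R) = Real.exp (4 * Real.pi * R) := by
    rw [← Real.exp_add]; ring_nf
  have hq2 : qq ^ n * qq ^ n ≤ qq ^ n := by
    nlinarith [pow_pos qq_pos n, pow_le_one₀ qq_pos.le qq_lt_one.le (n := n)]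
  have hE2 : Real.exp (2 * Real.pi * R) ≤ Real.exp (4 * Real.pi * R) := by
    apply Real.exp_le_exp.mpr; nlinarith [Real.pi_pos]
  have hun : 0 ≤ ‖u‖ := norm_nonneg _
  have hvn : 0 ≤ ‖v‖ := norm_nonneg _
  have h3 : ‖u‖ * ‖v‖ ≤ qq ^ n * Real.exp (4 * Real.pi * R) := by
    calc ‖u‖ * ‖v‖ ≤ (qq ^ n * Real.exp (2 * Real.pi * R)) * (qq ^ n * Real.exp (2 * Real.pi * R)) := by
          exact mul_le_mul hub hvb hvn (mul_nonneg (pow_pos qq_pos n).le (Real.exp_pos _).le)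
    _ = (qq ^ n * qq ^ n) * (Real.exp (2 * Real.pi * R) * Real.exp (2 * Real.pi * R)) := by ring
    _ ≤ qq ^ n * Real.exp (4 * Real.pi * R) := by rw [hE]; gcongr
  have h4 : ‖u‖ ≤ qq ^ n * Real.exp (4 * Real.pi * R) := hub.trans (mul_le_mul_of_nonneg_left hE2 (pow_pos qq_pos n).le)
  have h5 : ‖v‖ ≤ qq ^ n * Real.exp (4 * Real.pi * R) := hvb.trans (mul_le_mul_of_nonneg_left hE2 (pow_pos qq_pos n).le)
  nlinarith

lemma Ffac_norm_le {z : ℂ} {R : ℝ} (hR : 0 ≤ R) (hz : ‖z‖ ≤ R) {n : ℕ} (hn : 1 ≤ n) :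
    ‖Ffac n z‖ ≤ 1 + 3 * Real.exp (4 * Real.pi * R) * qq ^ n := by
  calc ‖Ffac n z‖ = ‖(Ffac n z - 1) + 1‖ := by ring_nf
  _ ≤ ‖Ffac n z - 1‖ + ‖(1:ℂ)‖ := norm_add_le _ _
  _ = ‖Ffac n z - 1‖ + 1 := by rw [norm_one]
  _ ≤ 3 * Real.exp (4 * Real.pi * R) * qq ^ n + 1 := by gcongr; exact Ffac_sub_one_norm hR hz hn
  _ = _ := by ring

lemma summable_qq_pow : Summable (fun n : ℕ => qq ^ n) :=
  summable_geometric_of_lt_one qq_pos.le qq_lt_one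

lemma Qp_norm_le {z : ℂ} {R : ℝ} (hR : 0 ≤ R) (hz : ‖z‖ ≤ R) (N : ℕ) :
    ‖Qp N z‖ ≤ Real.exp (3 * Real.exp (4 * Real.pi * R) * (1 - qq)⁻¹) := by
  calc ‖Qp N z‖ ≤ ∏ n ∈ Finset.Icc 1 N, ‖Ffac n z‖ := norm_prod_le _ _
  _ ≤ ∏ n ∈ Finset.Icc 1 N, Real.exp (3 * Real.exp (4 * Real.pi * R) * qq ^ n) := by
      apply Finset.prod_le_prod (fun i _ => norm_nonneg _)
      intro i hi
      refine (Ffac_norm_le hR hz (Finset.mem_Icc.mp hi).1).trans ?_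
      have := Real.add_one_le_exp (3 * Real.exp (4 * Real.pi * R) * qq ^ i)
      linarith
  _ = Real.exp (∑ n ∈ Finset.Icc 1 N, 3 * Real.exp (4 * Real.pi * R) * qq ^ n) := by
      rw [Real.exp_sum]
  _ ≤ Real.exp (3 * Real.exp (4 * Real.pi * R) * (1 - qq)⁻¹) := by
      apply Real.exp_le_exp.mpr
      rw [← Finset.mul_sum]
      apply mul_le_mul_of_nonneg_left _ (mul_nonneg (by norm_num) (Real.exp_pos _).le)
      calc ∑ n ∈ Finset.Icc 1 N, qq ^ n ≤ ∑' n : ℕ, qq ^ n :=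
            Summable.sum_le_tsum _ (fun i _ => (pow_pos qq_pos i).le) summable_qq_pow
      _ = (1 - qq)⁻¹ := tsum_geometric_of_lt_one qq_pos.le qq_lt_one

lemma tendstoUniformlyOn_self {α β : Type*} [UniformSpace β] (f : α → β) (s : Set α) :
    TendstoUniformlyOn (fun _ : ℕ => f) f Filter.atTop s := fun u hu =>
  Filter.Eventually.of_forall fun _ => fun x _ => refl_mem_uniformity hu

lemma tlu_of_diff_bound (P : ℕ → ℂ → ℂ)
    (hb : ∀ R : ℝ, 0 < R → ∃ u : ℕ → ℝ, Summable u ∧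
      ∀ (k : ℕ) (z : ℂ), ‖z‖ ≤ R → ‖P (k + 1) z - P k z‖ ≤ u k) :
    TendstoLocallyUniformly P
      (fun z => P 0 z + ∑' k, (P (k + 1) z - P k z)) Filter.atTop := by
  rw [tendstoLocallyUniformly_iff_forall_isCompact]
  intro K hK
  obtain ⟨R₀, hR₀⟩ := (Metric.isBounded_iff_subset_closedBall 0).mp hK.isBounded
  set R : ℝ := max R₀ 1 with hR
  have hRpos : 0 < R := lt_of_lt_of_le one_pos (le_max_right _ _)
  have hKR : ∀ z ∈ K, ‖z‖ ≤ R := by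
    intro z hz
    have := hR₀ hz
    simp only [Metric.mem_closedBall, Complex.dist_eq, sub_zero] at this
    calc ‖z‖ ≤ R₀ := this
    _ ≤ R := le_max_left _ _
  obtain ⟨u, hu, hub⟩ := hb R hRpos
  have h1 : TendstoUniformlyOn (fun N z => ∑ k ∈ Finset.range N, (P (k + 1) z - P k z))
      (fun z => ∑' k, (P (k + 1) z - P k z)) Filter.atTop K :=
    tendstoUniformlyOn_tsum_nat hu (fun k z hz => hub k z (hKR z hz))
  have h2 := (tendstoUniformlyOn_self (fun z => P 0 z) K).add h1
  apply h2.congr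
  filter_upwards with N
  intro z _
  simp only [Pi.add_apply]
  rw [Finset.sum_range_sub (f := fun k => P k z)]
  ring

lemma summable_aux (c : ℝ) : Summable (fun k : ℕ => c * qq ^ (k + 1)) := by
  have := (summable_qq_pow.mul_left (c * qq))
  apply this.congr
  intro k
  rw [pow_succ]
  ring

lemma Qp_succ (k : ℕ) (z : ℂ) : Qp (k + 1) z = Qp k z * Ffac (k + 1) z := by
  rw [Qp, Qp, Finset.prod_Icc_succ_top (Nat.succ_le_succ (Nat.zero_le k))]

lemma one_sub_ecf_norm_le {z : ℂ} {R : ℝ} (hz : ‖z‖ ≤ R) :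
    ‖1 - ecf z‖ ≤ 1 + Real.exp (2 * Real.pi * R) := by
  calc ‖1 - ecf z‖ ≤ ‖(1:ℂ)‖ + ‖ecf z‖ := norm_sub_le _ _
  _ ≤ 1 + Real.exp (2 * Real.pi * R) := by rw [norm_one]; gcongr; exact norm_ecf_le hz

noncomputable def Gfun (z : ℂ) : ℂ := Qp 0 z + ∑' k, (Qp (k + 1) z - Qp k z)

noncomputable def hfun (z : ℂ) : ℂ := partialProd 0 z + ∑' k, (partialProd (k + 1) z - partialProd k z)

lemma Qp_diff_bound {R : ℝ} (hR : 0 < R) (k : ℕ) (z : ℂ) (hz : ‖z‖ ≤ R) :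
    ‖Qp (k + 1) z - Qp k z‖ ≤
      Real.exp (3 * Real.exp (4 * Real.pi * R) * (1 - qq)⁻¹) * (3 * Real.exp (4 * Real.pi * R) * qq ^ (k + 1)) := by
  rw [Qp_succ, show Qp k z * Ffac (k + 1) z - Qp k z = Qp k z * (Ffac (k + 1) z - 1) by ring,
    norm_mul]
  exact mul_le_mul (Qp_norm_le hR.le hz k)
    (Ffac_sub_one_norm hR.le hz (Nat.succ_le_succ (Nat.zero_le k)))
    (norm_nonneg _) (Real.exp_pos _).le

lemma Gconv : TendstoLocallyUniformly Qp Gfun Filter.atTop := by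
  apply tlu_of_diff_bound
  intro R hR
  refine ⟨fun k => Real.exp (3 * Real.exp (4 * Real.pi * R) * (1 - qq)⁻¹) *
    (3 * Real.exp (4 * Real.pi * R) * qq ^ (k + 1)), ?_, fun k z hz => Qp_diff_bound hR k z hz⟩
  exact (summable_aux (Real.exp (3 * Real.exp (4 * Real.pi * R) * (1 - qq)⁻¹) *
    (3 * Real.exp (4 * Real.pi * R)))).congr (fun k => by ring)

lemma hconv : TendstoLocallyUniformly partialProd hfun Filter.atTop := by
  apply tlu_of_diff_bound
  intro R hR
  refine ⟨fun k => (1 + Real.exp (2 * Real.pi * R)) *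
    (Real.exp (3 * Real.exp (4 * Real.pi * R) * (1 - qq)⁻¹) * (3 * Real.exp (4 * Real.pi * R) * qq ^ (k + 1))),
    ?_, ?_⟩
  · exact ((summable_aux (Real.exp (3 * Real.exp (4 * Real.pi * R) * (1 - qq)⁻¹) *
      (3 * Real.exp (4 * Real.pi * R)))).congr (fun k => by ring)).mul_left _
  · intro k z hz
    rw [partialProd_eq, partialProd_eq, show (1 - ecf z) * Qp (k+1) z - (1 - ecf z) * Qp k z
      = (1 - ecf z) * (Qp (k+1) z - Qp k z) by ring, norm_mul]
    exact mul_le_mul (one_sub_ecf_norm_le hz) (Qp_diff_bound hR k z hz) (norm_nonneg _)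
      (by positivity)

lemma Qp_tendsto (z : ℂ) : Filter.Tendsto (fun N => Qp N z) Filter.atTop (nhds (Gfun z)) :=
  ((tendstoLocallyUniformlyOn_univ).mpr Gconv).tendsto_at (Set.mem_univ z)

lemma partialProd_tendsto (z : ℂ) :
    Filter.Tendsto (fun N => partialProd N z) Filter.atTop (nhds (hfun z)) :=
  ((tendstoLocallyUniformlyOn_univ).mpr hconv).tendsto_at (Set.mem_univ z)

lemma hfun_eq (z : ℂ) : hfun z = (1 - ecf z) * Gfun z := by
  refine tendsto_nhds_unique (partialProd_tendsto z) ?_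
  have := (Qp_tendsto z).const_mul (1 - ecf z)
  exact this.congr (fun N => (partialProd_eq N z).symm)

lemma ecf_differentiable : Differentiable ℂ ecf := by
  have : ecf = fun z => Complex.exp (2 * (Real.pi : ℂ) * Complex.I * z) := rfl
  rw [this]
  exact (differentiable_id.const_mul _).cexp

lemma diff_finset_prod (s : Finset ℕ) (f : ℕ → ℂ → ℂ) (hf : ∀ n ∈ s, Differentiable ℂ (f n)) :
    Differentiable ℂ (fun z => ∏ n ∈ s, f n z) := by
  classical
  induction s using Finset.induction_on with
  | empty => simpa using differentiable_const (1 : ℂ)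
  | insert _ _ hns ih =>
    rename_i a s'
    simp only [Finset.prod_insert hns]
    exact (hf a (Finset.mem_insert_self _ _)).mul
      (ih (fun n hn => hf n (Finset.mem_insert_of_mem hn)))

lemma Ffac_differentiable (n : ℕ) : Differentiable ℂ (Ffac n) := by
  have : Ffac n = fun z => (1 - ecf ((n : ℂ) * Complex.I + z)) * (1 - ecf ((n : ℂ) * Complex.I - z)) := rfl
  rw [this]
  exact ((differentiable_const _).sub (ecf_differentiable.comp
      ((differentiable_const _).add differentiable_id))).mul
    ((differentiable_const _).sub (ecf_differentiable.comp
      ((differentiable_const _).sub differentiable_id)))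

lemma Qp_differentiable (N : ℕ) : Differentiable ℂ (Qp N) :=
  diff_finset_prod _ _ (fun n _ => Ffac_differentiable n)

lemma partialProd_differentiable (N : ℕ) : Differentiable ℂ (partialProd N) := by
  have : partialProd N = fun z => (1 - ecf z) * Qp N z := rfl
  rw [this]
  exact ((differentiable_const _).sub ecf_differentiable).mul (Qp_differentiable N)

lemma tlu_differentiable {P : ℕ → ℂ → ℂ} {L : ℂ → ℂ}
    (h : TendstoLocallyUniformly P L Filter.atTop)
    (hP : ∀ N, Differentiable ℂ (P N)) : Differentiable ℂ L := by
  have h' : TendstoLocallyUniformlyOn P L Filter.atTop Set.univ :=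
    (tendstoLocallyUniformlyOn_univ).mpr h
  have := h'.differentiableOn (Filter.Eventually.of_forall
    (fun N => (hP N).differentiableOn)) isOpen_univ
  rw [← differentiableOn_univ]
  exact this

lemma Gfun_differentiable : Differentiable ℂ Gfun := tlu_differentiable Gconv Qp_differentiable
lemma hfun_differentiable : Differentiable ℂ hfun := tlu_differentiable hconv partialProd_differentiable

lemma norm_prod_sub_one_le (s : Finset ℕ) (f : ℕ → ℂ) :
    ‖∏ n ∈ s, f n - 1‖ ≤ ∏ n ∈ s, (1 + ‖f n - 1‖) - 1 := by
  classical
  induction s using Finset.induction_on with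
  | empty => simp
  | insert _ _ hns ih =>
    rename_i a s'
    rw [Finset.prod_insert hns, Finset.prod_insert hns]
    have key : f a * ∏ n ∈ s', f n - 1 = (f a - 1) * ∏ n ∈ s', f n + (∏ n ∈ s', f n - 1) := by ring
    rw [key]
    have h1 : ‖∏ n ∈ s', f n‖ ≤ ∏ n ∈ s', (1 + ‖f n - 1‖) := by
      refine (Finset.norm_prod_le _ _).trans (Finset.prod_le_prod (fun i _ => norm_nonneg _) ?_)
      intro i _
      calc ‖f i‖ = ‖1 + (f i - 1)‖ := by ring_nf
      _ ≤ ‖(1:ℂ)‖ + ‖f i - 1‖ := norm_add_le _ _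
      _ = 1 + ‖f i - 1‖ := by rw [norm_one]
    calc ‖(f a - 1) * ∏ n ∈ s', f n + (∏ n ∈ s', f n - 1)‖
        ≤ ‖f a - 1‖ * ‖∏ n ∈ s', f n‖ + ‖∏ n ∈ s', f n - 1‖ := by
          refine (norm_add_le _ _).trans ?_; rw [norm_mul]
    _ ≤ ‖f a - 1‖ * ∏ n ∈ s', (1 + ‖f n - 1‖) + (∏ n ∈ s', (1 + ‖f n - 1‖) - 1) := by
          gcongr
    _ = (1 + ‖f a - 1‖) * ∏ n ∈ s', (1 + ‖f n - 1‖) - 1 := by ring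

lemma prod_one_add_le (s : Finset ℕ) (d : ℕ → ℝ) (hd : ∀ n ∈ s, 0 ≤ d n)
    (hs : ∑ n ∈ s, d n ≤ 1 / 2) :
    ∏ n ∈ s, (1 + d n) ≤ 1 + 2 * ∑ n ∈ s, d n := by
  classical
  induction s using Finset.induction_on with
  | empty => simp
  | insert _ _ hns ih =>
    rename_i a s'
    rw [Finset.sum_insert hns] at hs ⊢
    rw [Finset.prod_insert hns]
    have hda : 0 ≤ d a := hd a (Finset.mem_insert_self _ _)
    have hd' : ∀ n ∈ s', 0 ≤ d n := fun n hn => hd n (Finset.mem_insert_of_mem hn)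
    have hsum' : 0 ≤ ∑ n ∈ s', d n := Finset.sum_nonneg hd'
    have hs' : ∑ n ∈ s', d n ≤ 1 / 2 := by linarith
    have := ih hd' hs'
    nlinarith [Finset.prod_nonneg (fun n hn => by linarith [hd' n hn] : ∀ n ∈ s', (0:ℝ) ≤ 1 + d n)]

lemma Ioc_sum_qq_le (m N : ℕ) : ∑ n ∈ Finset.Ioc m N, qq ^ n ≤ qq ^ (m + 1) * (1 - qq)⁻¹ := by
  rw [← Finset.Ico_add_one_add_one_eq_Ioc, Finset.sum_Ico_eq_sum_range]
  have : ∀ i, qq ^ (m + 1 + i) = qq ^ (m + 1) * qq ^ i := fun i => pow_add qq (m+1) i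
  calc ∑ i ∈ Finset.range (N + 1 - (m + 1)), qq ^ (m + 1 + i)
      = qq ^ (m + 1) * ∑ i ∈ Finset.range (N + 1 - (m + 1)), qq ^ i := by
        rw [Finset.mul_sum]; exact Finset.sum_congr rfl (fun i _ => this i)
  _ ≤ qq ^ (m + 1) * (1 - qq)⁻¹ := by
      apply mul_le_mul_of_nonneg_left _ (pow_pos qq_pos _).le
      calc ∑ i ∈ Finset.range (N + 1 - (m + 1)), qq ^ i ≤ ∑' i : ℕ, qq ^ i :=
            Summable.sum_le_tsum _ (fun i _ => (pow_pos qq_pos i).le) summable_qq_pow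
      _ = (1 - qq)⁻¹ := tsum_geometric_of_lt_one qq_pos.le qq_lt_one

lemma Gfun_ne_zero {z : ℂ} (hz : ∀ n : ℕ, 1 ≤ n → Ffac n z ≠ 0) : Gfun z ≠ 0 := by
  set R : ℝ := ‖z‖ + 1 with hRdef
  have hR : 0 < R := by positivity
  have hzR : ‖z‖ ≤ R := by simp [hRdef]
  set E : ℝ := 3 * Real.exp (4 * Real.pi * R) with hE
  have hEpos : 0 < E := by positivity
  -- choose m with E * qq^(m+1) * (1-qq)⁻¹ ≤ 1/4
  have hqinv : 0 < (1 - qq)⁻¹ := inv_pos.mpr (by linarith [qq_lt_one])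
  obtain ⟨m, hm⟩ := exists_pow_lt_of_lt_one
    (show (0:ℝ) < (1/4) / (E * (1 - qq)⁻¹) by positivity) qq_lt_one
  have hqm : qq ^ (m + 1) ≤ qq ^ m := by
    rw [pow_succ]
    nlinarith [pow_pos qq_pos m, qq_lt_one, qq_pos]
  have htail : ∀ N, ∑ n ∈ Finset.Ioc m N, E * qq ^ n ≤ 1 / 4 := by
    intro N
    rw [← Finset.mul_sum]
    have h1 := Ioc_sum_qq_le m N
    have h2 : E * (qq ^ (m + 1) * (1 - qq)⁻¹) ≤ E * (qq ^ m * (1 - qq)⁻¹) := by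
      apply mul_le_mul_of_nonneg_left _ hEpos.le
      exact mul_le_mul_of_nonneg_right hqm hqinv.le
    have h3 : qq ^ m * (1 - qq)⁻¹ < ((1/4) / (E * (1 - qq)⁻¹)) * (1 - qq)⁻¹ :=
      mul_lt_mul_of_pos_right hm hqinv
    have hq1 : (1:ℝ) - qq ≠ 0 := by linarith [qq_lt_one]
    have h4 : E * (((1/4) / (E * (1 - qq)⁻¹)) * (1 - qq)⁻¹) = 1/4 := by
      field_simp
    nlinarith [mul_le_mul_of_nonneg_left h1 hEpos.le]
  -- tail products are ≥ 1/2 in norm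
  have hT : ∀ N, ‖∏ n ∈ Finset.Ioc m N, Ffac n z - 1‖ ≤ 1 / 2 := by
    intro N
    refine (norm_prod_sub_one_le _ _).trans ?_
    have h5 : ∏ n ∈ Finset.Ioc m N, (1 + ‖Ffac n z - 1‖) ≤
        ∏ n ∈ Finset.Ioc m N, (1 + E * qq ^ n) := by
      apply Finset.prod_le_prod (fun i _ => by positivity)
      intro i hi
      have hi1 : 1 ≤ i := le_trans (Nat.succ_le_succ (Nat.zero_le m)) (Nat.succ_le_of_lt (Finset.mem_Ioc.mp hi).1)
      have := Ffac_sub_one_norm hR.le hzR hi1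
      rw [hE]
      linarith
    have h6 : ∏ n ∈ Finset.Ioc m N, (1 + E * qq ^ n) ≤ 1 + 2 * ∑ n ∈ Finset.Ioc m N, E * qq ^ n :=
      prod_one_add_le _ _ (fun n _ => mul_nonneg hEpos.le (pow_pos qq_pos n).le)
        (by linarith [htail N])
    have h7 := htail N
    linarith
  have hTnorm : ∀ N, 1 / 2 ≤ ‖∏ n ∈ Finset.Ioc m N, Ffac n z‖ := by
    intro N
    have h9 := hT N
    have h8 := abs_norm_sub_norm_le (∏ n ∈ Finset.Ioc m N, Ffac n z) 1
    rw [norm_one] at h8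
    have := abs_le.mp (h8.trans h9)
    linarith [this.1]
  have hQm : Qp m z ≠ 0 := by
    rw [Qp]
    apply Finset.prod_ne_zero_iff.mpr
    intro n hn
    exact hz n (Finset.mem_Icc.mp hn).1
  -- Qp N z = Qp m z * tail for N ≥ m
  have hsplit : ∀ N, m ≤ N → (Qp m z)⁻¹ * Qp N z = ∏ n ∈ Finset.Ioc m N, Ffac n z := by
    intro N hN
    have : Qp m z * ∏ n ∈ Finset.Ioc m N, Ffac n z = Qp N z := by
      rw [Qp, Qp, show Finset.Icc 1 m = Finset.Ioc 0 m by rw [← Finset.Icc_add_one_left_eq_Ioc, zero_add],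
        show Finset.Icc 1 N = Finset.Ioc 0 N by rw [← Finset.Icc_add_one_left_eq_Ioc, zero_add]]
      exact Finset.prod_Ioc_consecutive _ (Nat.zero_le m) hN
    rw [inv_mul_eq_iff_eq_mul₀ hQm]
    exact this.symm
  have hL : Filter.Tendsto (fun N => (Qp m z)⁻¹ * Qp N z) Filter.atTop
      (nhds ((Qp m z)⁻¹ * Gfun z)) := (Qp_tendsto z).const_mul _
  have hfinal : 1 / 2 ≤ ‖(Qp m z)⁻¹ * Gfun z‖ := by
    apply ge_of_tendsto (hL.norm)
    filter_upwards [Filter.eventually_ge_atTop m] with N hN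
    rw [hsplit N hN]
    exact hTnorm N
  intro h0
  rw [h0, mul_zero, norm_zero] at hfinal
  norm_num at hfinal

/-- The Gaussian integer lattice `ℤ + iℤ`. -/
def gaussLattice : Set ℂ := {z | ∃ a b : ℤ, z = (a : ℂ) + (b : ℂ) * Complex.I}

lemma one_sub_ecf_ne_zero {z : ℂ} (hz : z ∉ gaussLattice) : 1 - ecf z ≠ 0 := by
  intro h
  have h1 : ecf z = 1 := by linear_combination -h
  obtain ⟨k, hk⟩ := (ecf_eq_one_iff z).mp h1
  exact hz ⟨k, 0, by simp [hk]⟩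

lemma Ffac_ne_zero_of_not_lattice {z : ℂ} (hz : z ∉ gaussLattice) (n : ℕ) (hn : 1 ≤ n) :
    Ffac n z ≠ 0 := by
  rw [Ffac]
  apply mul_ne_zero
  · intro h
    have h1 : ecf ((n : ℂ) * Complex.I + z) = 1 := by linear_combination -h
    obtain ⟨k, hk⟩ := (ecf_eq_one_iff _).mp h1
    refine hz ⟨k, -(n : ℤ), ?_⟩
    push_cast
    linear_combination hk
  · intro h
    have h1 : ecf ((n : ℂ) * Complex.I - z) = 1 := by linear_combination -h
    obtain ⟨k, hk⟩ := (ecf_eq_one_iff _).mp h1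
    refine hz ⟨-k, (n : ℤ), ?_⟩
    push_cast
    linear_combination -hk

lemma Ffac_ne_zero_at_zero (n : ℕ) (hn : 1 ≤ n) : Ffac n (0 : ℂ) ≠ 0 := by
  have key : ecf ((n : ℂ) * Complex.I) ≠ 1 := by
    intro h
    obtain ⟨k, hk⟩ := (ecf_eq_one_iff _).mp h
    have him : ((n : ℂ) * Complex.I).im = ((k : ℂ) : ℂ).im := by rw [hk]
    simp at him
    omega
  rw [Ffac]
  apply mul_ne_zero
  · rw [add_zero]; intro h; exact key (by linear_combination -h)
  · rw [sub_zero]; intro h; exact key (by linear_combination -h)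

lemma hfun_ne_zero_of_not_lattice {z : ℂ} (hz : z ∉ gaussLattice) : hfun z ≠ 0 := by
  rw [hfun_eq]
  exact mul_ne_zero (one_sub_ecf_ne_zero hz) (Gfun_ne_zero (Ffac_ne_zero_of_not_lattice hz))

lemma Gfun_zero_ne_zero : Gfun 0 ≠ 0 := Gfun_ne_zero Ffac_ne_zero_at_zero

lemma hfun_zero : hfun 0 = 0 := by
  rw [hfun_eq, ecf_zero]
  simp

lemma ecf_add_int (w : ℂ) (k : ℤ) : ecf (w + (k : ℂ)) = ecf w := by
  rw [ecf_add, ecf_int, mul_one]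

lemma partialProd_period (N : ℕ) (z : ℂ) : partialProd N (z + 1) = partialProd N z := by
  rw [partialProd, partialProd]
  congr 1
  · rw [show z + 1 = z + ((1 : ℤ) : ℂ) by norm_num, ecf_add_int]
  · apply Finset.prod_congr rfl
    intro n _
    congr 2
    · rw [show (n : ℂ) * Complex.I + (z + 1) = ((n : ℂ) * Complex.I + z) + ((1 : ℤ) : ℂ) by
        push_cast; ring, ecf_add_int]
    · rw [show (n : ℂ) * Complex.I - (z + 1) = ((n : ℂ) * Complex.I - z) + ((-1 : ℤ) : ℂ) by
        push_cast; ring, ecf_add_int]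

lemma hfun_period (z : ℂ) : hfun (z + 1) = hfun z := by
  refine tendsto_nhds_unique (partialProd_tendsto (z + 1)) ?_
  exact (partialProd_tendsto z).congr (fun N => (partialProd_period N z).symm)

lemma partialProd_range_form (N : ℕ) (w : ℂ) :
    partialProd N w = (∏ m ∈ Finset.range (N + 1), (1 - ecf ((m : ℂ) * Complex.I + w))) *
      ∏ i ∈ Finset.range N, (1 - ecf ((((i : ℂ)) + 1) * Complex.I - w)) := by
  rw [partialProd, Finset.prod_mul_distrib]
  have e1 : ∀ (f : ℕ → ℂ), ∏ n ∈ Finset.Icc 1 N, f n = ∏ i ∈ Finset.range N, f (1 + i) := by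
    intro f
    rw [← Finset.Ico_add_one_right_eq_Icc, Finset.prod_Ico_eq_prod_range]
    simp
  rw [e1, e1]
  rw [Finset.prod_range_succ' (fun m => 1 - ecf ((m : ℂ) * Complex.I + w)) N]
  have e2 : (1 : ℂ) - ecf (((0:ℕ) : ℂ) * Complex.I + w) = 1 - ecf w := by
    norm_num
  rw [e2]
  have e3 : ∏ i ∈ Finset.range N, (1 - ecf (((1 + i : ℕ) : ℂ) * Complex.I + w)) =
      ∏ i ∈ Finset.range N, (1 - ecf ((((i+1):ℕ) : ℂ) * Complex.I + w)) := by
    apply Finset.prod_congr rfl; intro i _; rw [Nat.add_comm 1 i]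
  have e4 : ∏ i ∈ Finset.range N, (1 - ecf (((1 + i : ℕ) : ℂ) * Complex.I - w)) =
      ∏ i ∈ Finset.range N, (1 - ecf ((((i : ℂ)) + 1) * Complex.I - w)) := by
    apply Finset.prod_congr rfl; intro i _; congr 2; push_cast; ring
  rw [e3, e4]
  ring

lemma FE3fin (N : ℕ) (z : ℂ) :
    partialProd N (z + Complex.I) * ((1 - ecf z) * (1 - ecf ((N : ℂ) * Complex.I - z))) =
    partialProd N z * ((1 - ecf (((N : ℂ) + 1) * Complex.I + z)) * (1 - ecf (-z))) := by
  set g : ℕ → ℂ := fun m => 1 - ecf ((m : ℂ) * Complex.I + z) with hgdef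
  set k : ℕ → ℂ := fun m => 1 - ecf ((m : ℂ) * Complex.I - z) with hkdef
  have L1 : ∏ m ∈ Finset.range (N + 1), (1 - ecf ((m : ℂ) * Complex.I + (z + Complex.I))) =
      ∏ m ∈ Finset.range (N + 1), g (m + 1) := by
    apply Finset.prod_congr rfl; intro m _
    rw [hgdef]
    congr 1
    push_cast
    ring
  have L2 : ∏ i ∈ Finset.range N, (1 - ecf (((i : ℂ) + 1) * Complex.I - (z + Complex.I))) =
      ∏ i ∈ Finset.range N, k i := by
    apply Finset.prod_congr rfl; intro i _
    rw [hkdef]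
    congr 1
    push_cast
    ring
  have L3 : ∏ i ∈ Finset.range N, (1 - ecf (((i : ℂ) + 1) * Complex.I - z)) =
      ∏ i ∈ Finset.range N, k (i + 1) := by
    apply Finset.prod_congr rfl; intro i _
    rw [hkdef]
    congr 1
    push_cast
    ring
  have e0 : (1 : ℂ) - ecf z = g 0 := by rw [hgdef]; norm_num
  have eN : (1 : ℂ) - ecf ((N : ℂ) * Complex.I - z) = k N := rfl
  have eN1 : (1 : ℂ) - ecf (((N : ℂ) + 1) * Complex.I + z) = g (N + 1) := by
    rw [hgdef]; congr 1; push_cast; ring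
  have ek0 : (1 : ℂ) - ecf (-z) = k 0 := by rw [hkdef]; norm_num
  rw [partialProd_range_form N (z + Complex.I), partialProd_range_form N z,
    L1, L2, L3, e0, eN, eN1, ek0]
  have hg1 : (∏ m ∈ Finset.range (N + 1), g (m + 1)) * g 0 = ∏ m ∈ Finset.range (N + 2), g m :=
    (Finset.prod_range_succ' g (N + 1)).symm
  have hk1 : (∏ i ∈ Finset.range N, k i) * k N = ∏ i ∈ Finset.range (N + 1), k i :=
    (Finset.prod_range_succ k N).symm
  have hg2 : (∏ m ∈ Finset.range (N + 1), g m) * g (N + 1) = ∏ m ∈ Finset.range (N + 2), g m :=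
    (Finset.prod_range_succ g (N + 1)).symm
  have hk2 : (∏ i ∈ Finset.range N, k (i + 1)) * k 0 = ∏ i ∈ Finset.range (N + 1), k i :=
    (Finset.prod_range_succ' k N).symm
  calc (∏ m ∈ Finset.range (N + 1), g (m + 1)) * (∏ i ∈ Finset.range N, k i) * (g 0 * k N)
      = ((∏ m ∈ Finset.range (N + 1), g (m + 1)) * g 0) * ((∏ i ∈ Finset.range N, k i) * k N) := by
        ring
  _ = (∏ m ∈ Finset.range (N + 2), g m) * (∏ i ∈ Finset.range (N + 1), k i) := by rw [hg1, hk1]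
  _ = ((∏ m ∈ Finset.range (N + 1), g m) * g (N + 1)) * ((∏ i ∈ Finset.range N, k (i + 1)) * k 0) := by
        rw [hg2, hk2]
  _ = (∏ m ∈ Finset.range (N + 1), g m) * (∏ i ∈ Finset.range N, k (i + 1)) * (g (N + 1) * k 0) := by
        ring

lemma tendsto_ecf_vert_sub (z : ℂ) :
    Filter.Tendsto (fun N : ℕ => ecf ((N : ℂ) * Complex.I - z)) Filter.atTop (nhds 0) := by
  refine squeeze_zero_norm (a := fun N => qq ^ N * ‖ecf (-z)‖) (fun N => ?_) ?_
  · rw [show (N : ℂ) * Complex.I - z = (N : ℂ) * Complex.I + (-z) by ring, norm_ecf_vert]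
  · simpa using (tendsto_pow_atTop_nhds_zero_of_lt_one qq_pos.le qq_lt_one).mul_const ‖ecf (-z)‖

lemma tendsto_ecf_vert_add (z : ℂ) :
    Filter.Tendsto (fun N : ℕ => ecf (((N : ℂ) + 1) * Complex.I + z)) Filter.atTop (nhds 0) := by
  refine squeeze_zero_norm (a := fun N => qq ^ N * (qq * ‖ecf z‖)) (fun N => ?_) ?_
  · rw [show ((N : ℂ) + 1) * Complex.I + z = (((N + 1 : ℕ)) : ℂ) * Complex.I + z by push_cast; ring,
      norm_ecf_vert, pow_succ]
    ring_nf
    exact le_of_eq (by ring)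
  · simpa using (tendsto_pow_atTop_nhds_zero_of_lt_one qq_pos.le qq_lt_one).mul_const (qq * ‖ecf z‖)

lemma hIdent0 (z : ℂ) : hfun (z + Complex.I) * (1 - ecf z) = hfun z * (1 - ecf (-z)) := by
  have TL : Filter.Tendsto
      (fun N => partialProd N (z + Complex.I) * ((1 - ecf z) * (1 - ecf ((N : ℂ) * Complex.I - z))))
      Filter.atTop (nhds (hfun (z + Complex.I) * ((1 - ecf z) * (1 - 0)))) :=
    (partialProd_tendsto (z + Complex.I)).mul
      (tendsto_const_nhds.mul (tendsto_const_nhds.sub (tendsto_ecf_vert_sub z)))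
  have TR : Filter.Tendsto
      (fun N => partialProd N z * ((1 - ecf (((N : ℂ) + 1) * Complex.I + z)) * (1 - ecf (-z))))
      Filter.atTop (nhds (hfun z * ((1 - 0) * (1 - ecf (-z))))) :=
    (partialProd_tendsto z).mul
      ((tendsto_const_nhds.sub (tendsto_ecf_vert_add z)).mul tendsto_const_nhds)
  have := tendsto_nhds_unique TL (TR.congr (fun N => (FE3fin N z).symm))
  rw [sub_zero] at this
  calc hfun (z + Complex.I) * (1 - ecf z) = hfun (z + Complex.I) * ((1 - ecf z) * 1) := by ring
  _ = hfun z * (1 * (1 - ecf (-z))) := this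
  _ = hfun z * (1 - ecf (-z)) := by ring

lemma ecf_neg_mul (z : ℂ) : ecf (-z) * ecf z = 1 := by
  rw [← ecf_add]
  simp [ecf_zero]

lemma hIdent (z : ℂ) : hfun (z + Complex.I) = -ecf (-z) * hfun z := by
  have hcount : ({w : ℂ | ecf w = 1}).Countable := by
    apply (Set.countable_range ((↑) : ℤ → ℂ)).mono
    intro w hw
    obtain ⟨kk, hk⟩ := (ecf_eq_one_iff w).mp hw
    exact ⟨kk, hk.symm⟩
  have hdense : Dense ({w : ℂ | ecf w = 1}ᶜ) := hcount.dense_compl ℂ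
  have hcf : Continuous (fun w : ℂ => hfun (w + Complex.I)) :=
    hfun_differentiable.continuous.comp (continuous_id.add continuous_const)
  have hcg : Continuous (fun w : ℂ => -ecf (-w) * hfun w) :=
    ((ecf_differentiable.continuous.comp continuous_neg).neg).mul hfun_differentiable.continuous
  have heq : Set.EqOn (fun w : ℂ => hfun (w + Complex.I)) (fun w : ℂ => -ecf (-w) * hfun w)
      ({w : ℂ | ecf w = 1}ᶜ) := by
    intro w hw
    have h1 : (1 : ℂ) - ecf w ≠ 0 := sub_ne_zero_of_ne (Ne.symm hw)
    have h2 := hIdent0 w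
    have h3 : (1 : ℂ) - ecf (-w) = -ecf (-w) * (1 - ecf w) := by
      linear_combination -ecf_neg_mul w
    rw [h3] at h2
    have h4 : hfun (w + Complex.I) * (1 - ecf w) = (-ecf (-w) * hfun w) * (1 - ecf w) := by
      rw [h2]; ring
    exact mul_right_cancel₀ h1 h4
  exact funext_iff.mp (Continuous.ext_on hdense hcf hcg heq) z

lemma hasDerivAt_ecf (z : ℂ) : HasDerivAt ecf (2 * (Real.pi : ℂ) * Complex.I * ecf z) z := by
  have h := ((hasDerivAt_id z).const_mul (2 * (Real.pi : ℂ) * Complex.I)).cexp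
  have he : ecf = fun w => Complex.exp (2 * (Real.pi : ℂ) * Complex.I * w) := rfl
  rw [he]
  simpa [mul_comm] using h

lemma derivI {ζ : ℂ} (h0 : hfun ζ = 0) :
    deriv hfun (ζ + Complex.I) = -ecf (-ζ) * deriv hfun ζ := by
  have e1 : deriv (fun w => hfun (w + Complex.I)) ζ = deriv hfun (ζ + Complex.I) :=
    deriv_comp_add_const hfun Complex.I ζ
  have e2 : (fun w => hfun (w + Complex.I)) = (fun w => -ecf (-w) * hfun w) := funext hIdent
  have hneg : HasDerivAt (fun w : ℂ => -ecf (-w)) (2 * (Real.pi : ℂ) * Complex.I * ecf (-ζ)) ζ := by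
    have h1 : HasDerivAt (fun w : ℂ => ecf (-w))
        (-(2 * (Real.pi : ℂ) * Complex.I * ecf (-ζ))) ζ := by
      have h := (hasDerivAt_ecf (0 - ζ)).comp_const_sub 0 ζ
      simpa [zero_sub] using h
    exact h1.neg.congr_deriv (neg_neg _)
  have hprod := hneg.mul (hfun_differentiable ζ).hasDerivAt
  have e3 : deriv (fun w => -ecf (-w) * hfun w) ζ =
      2 * (Real.pi : ℂ) * Complex.I * ecf (-ζ) * hfun ζ + -ecf (-ζ) * deriv hfun ζ :=
    hprod.deriv
  rw [← e1, e2, e3, h0]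
  ring

lemma deriv_period (ζ : ℂ) : deriv hfun (ζ + 1) = deriv hfun ζ := by
  have e1 : deriv (fun w => hfun (w + 1)) ζ = deriv hfun (ζ + 1) :=
    deriv_comp_add_const hfun 1 ζ
  rw [← e1, funext hfun_period]

lemma hfun_shiftI_zero_iff (ζ : ℂ) : hfun (ζ + Complex.I) = 0 ↔ hfun ζ = 0 := by
  rw [hIdent]
  constructor
  · intro h
    rcases mul_eq_zero.mp h with h' | h'
    · exact absurd h' (by simpa using ecf_ne_zero (-ζ))
    · exact h'
  · intro h; rw [h, mul_zero]

def Pg (ζ : ℂ) : Prop := hfun ζ = 0 ∧ deriv hfun ζ ≠ 0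

lemma Pg_step1 (ζ : ℂ) : Pg ζ ↔ Pg (ζ + 1) := by
  unfold Pg
  rw [hfun_period, deriv_period]

lemma Pg_stepI (ζ : ℂ) : Pg ζ ↔ Pg (ζ + Complex.I) := by
  unfold Pg
  constructor
  · rintro ⟨h0, hd⟩
    refine ⟨(hfun_shiftI_zero_iff ζ).mpr h0, ?_⟩
    rw [derivI h0]
    exact mul_ne_zero (by simpa using ecf_ne_zero (-ζ)) hd
  · rintro ⟨h0', hd'⟩
    have h0 : hfun ζ = 0 := (hfun_shiftI_zero_iff ζ).mp h0'
    refine ⟨h0, ?_⟩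
    intro hz
    rw [derivI h0, hz, mul_zero] at hd'
    exact hd' rfl

lemma Pg_zero : Pg 0 := by
  constructor
  · exact hfun_zero
  · have hfe : hfun = fun z => (1 - ecf z) * Gfun z := funext hfun_eq
    have h1 : HasDerivAt (fun z : ℂ => 1 - ecf z)
        (-(2 * (Real.pi : ℂ) * Complex.I * ecf 0)) 0 := (hasDerivAt_ecf 0).const_sub 1
    have h2 := h1.mul (Gfun_differentiable 0).hasDerivAt
    have e3 : deriv hfun 0 = -(2 * (Real.pi : ℂ) * Complex.I * ecf 0) * Gfun 0 +
        (1 - ecf 0) * deriv Gfun 0 := by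
      rw [hfe]; exact h2.deriv
    rw [e3, ecf_zero]
    simp only [sub_self, zero_mul, add_zero, mul_one]
    intro h
    rcases mul_eq_zero.mp h with h' | h'
    · exact _root_.two_pi_I_ne_zero (neg_eq_zero.mp h')
    · exact Gfun_zero_ne_zero h'

lemma Pg_bI : ∀ b : ℤ, Pg ((b : ℂ) * Complex.I) := by
  intro b
  induction b using Int.induction_on with
  | zero => simpa using Pg_zero
  | succ i ih =>
    have := (Pg_stepI _).mp ih
    have e : ((((i : ℤ)) : ℂ)) * Complex.I + Complex.I = (((i : ℤ) + 1 : ℤ) : ℂ) * Complex.I := by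
      push_cast; ring
    rwa [e] at this
  | pred i ih =>
    have key : ((-(i : ℤ) - 1 : ℤ) : ℂ) * Complex.I + Complex.I = ((-(i : ℤ) : ℤ) : ℂ) * Complex.I := by
      push_cast; ring
    apply (Pg_stepI (((-(i : ℤ) - 1 : ℤ) : ℂ) * Complex.I)).mpr
    rwa [key]

lemma Pg_lattice (a b : ℤ) : Pg ((a : ℂ) + (b : ℂ) * Complex.I) := by
  induction a using Int.induction_on with
  | zero => simpa using Pg_bI b
  | succ i ih =>
    have := (Pg_step1 _).mp ih
    have e : ((((i : ℤ)) : ℂ)) + (b : ℂ) * Complex.I + 1 = (((i : ℤ) + 1 : ℤ) : ℂ) + (b : ℂ) * Complex.I := by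
      push_cast; ring
    rwa [e] at this
  | pred i ih =>
    have key : ((-(i : ℤ) - 1 : ℤ) : ℂ) + (b : ℂ) * Complex.I + 1 = ((-(i : ℤ) : ℤ) : ℂ) + (b : ℂ) * Complex.I := by
      push_cast; ring
    apply (Pg_step1 (((-(i : ℤ) - 1 : ℤ) : ℂ) + (b : ℂ) * Complex.I)).mpr
    rwa [key]

/-- the partial products converge uniformly on every compact subset of `ℂ`
to an entire function `𝔥` whose zero set is exactly `ℤ + iℤ`, every zero being simple. -/
theorem stmt4 :
    ∃ h : ℂ → ℂ,
      TendstoLocallyUniformly partialProd h Filter.atTop ∧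
      Differentiable ℂ h ∧
      (∀ ζ ∈ gaussLattice, h ζ = 0 ∧ deriv h ζ ≠ 0) ∧
      (∀ z, z ∉ gaussLattice → h z ≠ 0) := by
  refine ⟨hfun, hconv, hfun_differentiable, ?_, fun z hz => hfun_ne_zero_of_not_lattice hz⟩
  rintro ζ ⟨a, b, rfl⟩
  exact Pg_lattice a b
end

section
/- There exists a universal constant C > 0 such that for every f : 𝕋² × ℝ³ → ℝ which is continuously differentiable in the x-variable and for which f and all its first-order spatial derivatives belong to L²(𝕋² × ℝ³), one has the anisotropic Ladyzhenskaya inequality ‖f‖_{L⁴_x L²_v} ≤ C · ‖f‖_{L²(𝕋²×ℝ³)}^{1/2} · (‖f‖_{L²(𝕋²×ℝ³)} + ‖∇_x f‖_{L²(𝕋²×ℝ³)})^{1/2}. -/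
open MeasureTheory
open scoped ENNReal

/-- The flat torus `𝕋² = ℝ²/ℤ²` is modelled by `ℤ²`-periodic functions on `ℝ × ℝ`,
with integration over the fundamental domain `[0,1]²` (total mass 1). -/
noncomputable def μT : Measure (ℝ × ℝ) := volume.restrict (Set.Icc ((0:ℝ), (0:ℝ)) (1, 1))

/-- `ℤ²`-periodicity. -/
def ZZper {α : Type*} (f : ℝ × ℝ → α) : Prop :=
  ∀ (x : ℝ × ℝ) (m n : ℤ), f (x + ((m : ℝ), (n : ℝ))) = f x

lemma ofReal_norm_eq_coe_nnnorm {E : Type*} [SeminormedAddGroup E] (a : E) :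
    ENNReal.ofReal ‖a‖ = (‖a‖₊ : ℝ≥0∞) := ENNReal.ofReal_eq_coe_nnreal _

lemma eLpNorm_eq_lintegral_rpow_nnnorm {α E : Type*} [MeasurableSpace α] {μ : Measure α}
    [NormedAddCommGroup E] {p : ℝ≥0∞} (h0 : p ≠ 0) (htop : p ≠ ∞) {f : α → E} :
    eLpNorm f p μ = (∫⁻ x, (‖f x‖₊ : ℝ≥0∞) ^ p.toReal ∂μ) ^ (1 / p.toReal) :=
  eLpNorm_eq_lintegral_rpow_enorm_toReal h0 htop

lemma oneD {h d m : ℝ → ℝ} (hd : ∀ s, HasDerivAt h (d s) s)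
    (hdc : Continuous d) (hmc : Continuous m) (hdm : ∀ s, |d s| ≤ m s)
    {x t : ℝ} (hx : x ∈ Set.Icc (0:ℝ) 1) (ht : t ∈ Set.Icc (0:ℝ) 1) :
    h x ^ 2 ≤ h t ^ 2 + ∫ s in Set.Icc (0:ℝ) 1, 2 * |h s| * m s := by
  have hc : Continuous h := by
    rw [continuous_iff_continuousAt]; exact fun s => (hd s).continuousAt
  have hm0 : ∀ s, 0 ≤ m s := fun s => (abs_nonneg _).trans (hdm s)
  have hd2 : ∀ s, HasDerivAt (fun s => h s ^ 2) (2 * h s * d s) s := by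
    intro s
    have := (hd s).fun_pow 2
    simpa [mul_comm, mul_assoc, mul_left_comm] using this
  have hconti : IntervalIntegrable (fun s => 2 * h s * d s) volume t x :=
    ((continuous_const.mul hc).mul hdc).intervalIntegrable t x
  have hftc : ∫ s in t..x, 2 * h s * d s = h x ^ 2 - h t ^ 2 :=
    intervalIntegral.integral_eq_sub_of_hasDerivAt (fun s _ => hd2 s) hconti
  have hsub : Set.uIoc t x ⊆ Set.Icc (0:ℝ) 1 := by
    refine (Set.uIoc_subset_uIcc ..).trans ?_
    rw [← Set.uIcc_of_le (zero_le_one (α := ℝ))]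
    exact Set.uIcc_subset_uIcc (by rwa [Set.uIcc_of_le (zero_le_one (α := ℝ))]) (by rwa [Set.uIcc_of_le (zero_le_one (α := ℝ))])
  have hintOn : IntegrableOn (fun s => 2 * |h s| * m s) (Set.Icc (0:ℝ) 1) volume :=
    ((continuous_const.mul hc.abs).mul hmc).integrableOn_Icc
  have habs : |∫ s in t..x, 2 * h s * d s| ≤ ∫ s in Set.Icc (0:ℝ) 1, 2 * |h s| * m s := by
    rw [← Real.norm_eq_abs]
    refine (intervalIntegral.norm_integral_le_integral_norm_uIoc).trans ?_
    have hmono : ∀ s, ‖2 * h s * d s‖ ≤ 2 * |h s| * m s := by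
      intro s
      rw [Real.norm_eq_abs, abs_mul, abs_mul, abs_two]
      exact mul_le_mul_of_nonneg_left (hdm s) (by positivity)
    calc ∫ s in Set.uIoc t x, ‖2 * h s * d s‖
        ≤ ∫ s in Set.uIoc t x, 2 * |h s| * m s := by
          refine setIntegral_mono_on ?_ (hintOn.mono_set hsub) measurableSet_uIoc fun s _ => hmono s
          exact (((continuous_const.mul hc).mul hdc).norm.integrableOn_Icc.mono_set hsub)
      _ ≤ ∫ s in Set.Icc (0:ℝ) 1, 2 * |h s| * m s := by
          refine setIntegral_mono_set hintOn ?_ (HasSubset.Subset.eventuallyLE hsub)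
          exact Filter.Eventually.of_forall fun s => mul_nonneg (by positivity) (hm0 s)
  nlinarith [abs_le.mp habs |>.1, abs_le.mp habs |>.2, hftc]

lemma enn_of_sq (r : ℝ) : (‖r‖₊ : ℝ≥0∞) ^ (2:ℝ) = ENNReal.ofReal (r ^ 2) := by
  rw [← ofReal_norm_eq_coe_nnnorm, Real.norm_eq_abs,
    ENNReal.ofReal_rpow_of_nonneg (abs_nonneg r) (by norm_num)]
  congr 1
  rw [show (2:ℝ) = ((2:ℕ):ℝ) by norm_num, Real.rpow_natCast, sq_abs]

lemma pt2_fst {g : ℝ × ℝ → ℝ} (hg : ContDiff ℝ 1 g) {x₁ t x₂ : ℝ}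
    (hx : x₁ ∈ Set.Icc (0:ℝ) 1) (ht : t ∈ Set.Icc (0:ℝ) 1) :
    (‖g (x₁, x₂)‖₊ : ℝ≥0∞) ^ (2:ℝ) ≤ (‖g (t, x₂)‖₊ : ℝ≥0∞) ^ (2:ℝ)
      + ∫⁻ s in Set.Icc (0:ℝ) 1,
          2 * (‖g (s, x₂)‖₊ : ℝ≥0∞) * (‖(‖fderiv ℝ g (s, x₂)‖ : ℝ)‖₊ : ℝ≥0∞) := by
  have hgd : Differentiable ℝ g := hg.differentiable one_ne_zero
  have hfc : Continuous (fun y => fderiv ℝ g y) := hg.continuous_fderiv one_ne_zero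
  have hd : ∀ s : ℝ, HasDerivAt (fun s => g (s, x₂)) ((fderiv ℝ g (s, x₂)) (1, 0)) s := by
    intro s
    exact (hgd (s, x₂)).hasFDerivAt.comp_hasDerivAt s
      ((hasDerivAt_id s).prodMk (hasDerivAt_const s x₂))
  have hdc : Continuous fun s : ℝ => (fderiv ℝ g (s, x₂)) (1, 0) := by
    have : Continuous fun s : ℝ => fderiv ℝ g (s, x₂) :=
      hfc.comp (continuous_id.prodMk continuous_const)
    exact this.clm_apply continuous_const
  have hmc : Continuous fun s : ℝ => ‖fderiv ℝ g (s, x₂)‖ :=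
    (hfc.comp (continuous_id.prodMk continuous_const)).norm
  have hdm : ∀ s : ℝ, |(fderiv ℝ g (s, x₂)) (1, 0)| ≤ ‖fderiv ℝ g (s, x₂)‖ := by
    intro s
    have := (fderiv ℝ g (s, x₂)).le_opNorm ((1:ℝ), (0:ℝ))
    have hn : ‖((1:ℝ), (0:ℝ))‖ = 1 := by
      simp [Prod.norm_def]
    rw [hn, mul_one] at this
    simpa [Real.norm_eq_abs] using this
  have key := oneD hd hdc hmc hdm hx ht
  have h1 : (‖g (x₁, x₂)‖₊ : ℝ≥0∞) ^ (2:ℝ) ≤ ENNReal.ofReal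
      (g (t, x₂) ^ 2 + ∫ s in Set.Icc (0:ℝ) 1, 2 * |g (s, x₂)| * ‖fderiv ℝ g (s, x₂)‖) := by
    rw [enn_of_sq]; exact ENNReal.ofReal_le_ofReal key
  refine h1.trans ?_
  have hc : Continuous g := hg.continuous
  have hint : IntegrableOn (fun s => 2 * |g (s, x₂)| * ‖fderiv ℝ g (s, x₂)‖)
      (Set.Icc (0:ℝ) 1) volume := by
    exact ((continuous_const.mul ((hc.comp (continuous_id.prodMk continuous_const)).abs)).mul
      hmc).integrableOn_Icc
  rw [ENNReal.ofReal_add (by positivity) (by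
    exact setIntegral_nonneg measurableSet_Icc fun s _ =>
      mul_nonneg (by positivity) (norm_nonneg _))]
  rw [← enn_of_sq]
  gcongr
  rw [ofReal_integral_eq_lintegral_ofReal hint (Filter.Eventually.of_forall ?_)]
  · refine lintegral_mono fun s => ?_
    rw [ENNReal.ofReal_mul (by positivity), ENNReal.ofReal_mul (by norm_num)]
    rw [← ofReal_norm_eq_coe_nnnorm, ← ofReal_norm_eq_coe_nnnorm]
    simp [Real.norm_eq_abs, abs_of_nonneg (norm_nonneg (fderiv ℝ g (s, x₂)))]
  · intro s; dsimp only
    exact mul_nonneg (by positivity) (norm_nonneg _)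

lemma pt2_snd {g : ℝ × ℝ → ℝ} (hg : ContDiff ℝ 1 g) {x₁ t x₂ : ℝ}
    (hx : x₂ ∈ Set.Icc (0:ℝ) 1) (ht : t ∈ Set.Icc (0:ℝ) 1) :
    (‖g (x₁, x₂)‖₊ : ℝ≥0∞) ^ (2:ℝ) ≤ (‖g (x₁, t)‖₊ : ℝ≥0∞) ^ (2:ℝ)
      + ∫⁻ s in Set.Icc (0:ℝ) 1,
          2 * (‖g (x₁, s)‖₊ : ℝ≥0∞) * (‖(‖fderiv ℝ g (x₁, s)‖ : ℝ)‖₊ : ℝ≥0∞) := by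
  have hgd : Differentiable ℝ g := hg.differentiable one_ne_zero
  have hfc : Continuous (fun y => fderiv ℝ g y) := hg.continuous_fderiv one_ne_zero
  have hd : ∀ s : ℝ, HasDerivAt (fun s => g (x₁, s)) ((fderiv ℝ g (x₁, s)) (0, 1)) s := by
    intro s
    exact (hgd (x₁, s)).hasFDerivAt.comp_hasDerivAt s
      ((hasDerivAt_const s x₁).prodMk (hasDerivAt_id s))
  have hdc : Continuous fun s : ℝ => (fderiv ℝ g (x₁, s)) (0, 1) := by
    have : Continuous fun s : ℝ => fderiv ℝ g (x₁, s) :=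
      hfc.comp (continuous_const.prodMk continuous_id)
    exact this.clm_apply continuous_const
  have hmc : Continuous fun s : ℝ => ‖fderiv ℝ g (x₁, s)‖ :=
    (hfc.comp (continuous_const.prodMk continuous_id)).norm
  have hdm : ∀ s : ℝ, |(fderiv ℝ g (x₁, s)) (0, 1)| ≤ ‖fderiv ℝ g (x₁, s)‖ := by
    intro s
    have := (fderiv ℝ g (x₁, s)).le_opNorm ((0:ℝ), (1:ℝ))
    have hn : ‖((0:ℝ), (1:ℝ))‖ = 1 := by
      simp [Prod.norm_def]
    rw [hn, mul_one] at this
    simpa [Real.norm_eq_abs] using this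
  have key := oneD hd hdc hmc hdm hx ht
  have h1 : (‖g (x₁, x₂)‖₊ : ℝ≥0∞) ^ (2:ℝ) ≤ ENNReal.ofReal
      (g (x₁, t) ^ 2 + ∫ s in Set.Icc (0:ℝ) 1, 2 * |g (x₁, s)| * ‖fderiv ℝ g (x₁, s)‖) := by
    rw [enn_of_sq]; exact ENNReal.ofReal_le_ofReal key
  refine h1.trans ?_
  have hc : Continuous g := hg.continuous
  have hint : IntegrableOn (fun s => 2 * |g (x₁, s)| * ‖fderiv ℝ g (x₁, s)‖)
      (Set.Icc (0:ℝ) 1) volume := by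
    exact ((continuous_const.mul ((hc.comp (continuous_const.prodMk continuous_id)).abs)).mul
      hmc).integrableOn_Icc
  rw [ENNReal.ofReal_add (by positivity) (by
    exact setIntegral_nonneg measurableSet_Icc fun s _ =>
      mul_nonneg (by positivity) (norm_nonneg _))]
  rw [← enn_of_sq]
  gcongr
  rw [ofReal_integral_eq_lintegral_ofReal hint (Filter.Eventually.of_forall ?_)]
  · refine lintegral_mono fun s => ?_
    rw [ENNReal.ofReal_mul (by positivity), ENNReal.ofReal_mul (by norm_num)]
    rw [← ofReal_norm_eq_coe_nnnorm, ← ofReal_norm_eq_coe_nnnorm]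
    simp [Real.norm_eq_abs, abs_of_nonneg (norm_nonneg (fderiv ℝ g (x₁, s)))]
  · intro s; dsimp only
    exact mul_nonneg (by positivity) (norm_nonneg _)

lemma muT_eq :
    μT = (volume.restrict (Set.Icc (0:ℝ) 1)).prod (volume.restrict (Set.Icc (0:ℝ) 1)) := by
  rw [μT, Set.Icc_prod_eq, Measure.volume_eq_prod, Measure.prod_restrict]

lemma mu1_univ : (volume.restrict (Set.Icc (0:ℝ) 1)) Set.univ = 1 := by
  simp [Real.volume_Icc]

lemma ae_snd' {α β : Type*} [MeasurableSpace α] [MeasurableSpace β] (μ : Measure α)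
    (ν : Measure β) [SFinite μ] [SFinite ν] {P : β → Prop} (h : ∀ᵐ y ∂ν, P y) :
    ∀ᵐ x ∂(μ.prod ν), P x.2 := by
  rw [ae_iff] at h ⊢
  have : {x : α × β | ¬ P x.2} = Set.univ ×ˢ {y | ¬ P y} := by
    ext x; simp [Set.mem_prod]
  rw [this, Measure.prod_prod, h, mul_zero]

lemma ae_fst' {α β : Type*} [MeasurableSpace α] [MeasurableSpace β] (μ : Measure α)
    (ν : Measure β) [SFinite μ] [SFinite ν] {P : α → Prop} (h : ∀ᵐ y ∂μ, P y) :
    ∀ᵐ x ∂(μ.prod ν), P x.1 := by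
  rw [ae_iff] at h ⊢
  have : {x : α × β | ¬ P x.1} = {y | ¬ P y} ×ˢ Set.univ := by
    ext x; simp [Set.mem_prod]
  rw [this, Measure.prod_prod, h, zero_mul]

abbrev V3 : Type := ℝ × ℝ × ℝ

noncomputable def m1 : Measure ℝ := volume.restrict (Set.Icc (0:ℝ) 1)

noncomputable def pi3 : Measure ((ℝ × ℝ) × V3) := (m1.prod m1).prod volume

lemma muT_eq' : μT = m1.prod m1 := by rw [m1]; exact muT_eq

lemma m1_univ : m1 Set.univ = 1 := by rw [m1]; exact mu1_univ

lemma aemeas_lintegral_right {α β : Type*} [MeasurableSpace α] [MeasurableSpace β]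
    {μ : Measure α} {ν : Measure β} [SFinite ν] {k : α × β → ℝ≥0∞}
    (hk : AEMeasurable k (μ.prod ν)) :
    AEMeasurable (fun x => ∫⁻ y, k (x, y) ∂ν) μ := by
  refine (Measurable.lintegral_prod_right' (ν := ν) hk.measurable_mk).aemeasurable.congr ?_
  filter_upwards [Measure.ae_ae_of_ae_prod hk.ae_eq_mk] with x hx
  exact (lintegral_congr_ae hx).symm

lemma aemeas_lintegral_left {α β : Type*} [MeasurableSpace α] [MeasurableSpace β]
    {μ : Measure α} {ν : Measure β} [SFinite μ] [SFinite ν] {k : α × β → ℝ≥0∞}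
    (hk : AEMeasurable k (μ.prod ν)) :
    AEMeasurable (fun y => ∫⁻ x, k (x, y) ∂μ) ν := by
  have hswap : AEMeasurable (fun p : β × α => k (p.2, p.1)) (ν.prod μ) :=
    hk.comp_quasiMeasurePreserving (Measure.measurePreserving_swap (μ := ν) (ν := μ)).quasiMeasurePreserving
  exact aemeas_lintegral_right hswap

lemma ae_ae_slice {α β : Type*} [MeasurableSpace α] [MeasurableSpace β]
    {μ : Measure α} {ν : Measure β} [SFinite ν] {k : α × β → ℝ≥0∞}
    (hk : AEMeasurable k (μ.prod ν)) :
    ∀ᵐ x ∂μ, AEMeasurable (fun y => k (x, y)) ν := by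
  filter_upwards [Measure.ae_ae_of_ae_prod hk.ae_eq_mk] with x hx
  exact ((hk.measurable_mk.comp measurable_prodMk_left).aemeasurable).congr (hx.mono fun y h => h.symm)

instance : IsFiniteMeasure m1 := by
  constructor; rw [m1]; simp [Real.volume_Icc]

noncomputable def e1 : (ℝ × (ℝ × V3)) ≃ᵐ ((ℝ × ℝ) × V3) :=
  MeasurableEquiv.prodAssoc.symm.trans
    ((MeasurableEquiv.prodComm : (ℝ × ℝ) ≃ᵐ (ℝ × ℝ)).prodCongr (MeasurableEquiv.refl V3))

lemma e1_apply (p : ℝ × (ℝ × V3)) : e1 p = ((p.2.1, p.1), p.2.2) := rfl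

lemma e1_mp : MeasurePreserving e1 (m1.prod (m1.prod volume)) pi3 := by
  have h1 : MeasurePreserving (MeasurableEquiv.prodAssoc.symm :
      (ℝ × (ℝ × V3)) ≃ᵐ ((ℝ × ℝ) × V3)) (m1.prod (m1.prod volume)) ((m1.prod m1).prod volume) :=
    (measurePreserving_prodAssoc m1 m1 volume).symm MeasurableEquiv.prodAssoc
  have h2 : MeasurePreserving (Prod.map (Prod.swap : ℝ × ℝ → ℝ × ℝ) (id : V3 → V3))
      ((m1.prod m1).prod volume) ((m1.prod m1).prod volume) :=
    (Measure.measurePreserving_swap (μ := m1) (ν := m1)).prod (MeasurePreserving.id volume)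
  have : (⇑e1 : ℝ × (ℝ × V3) → (ℝ × ℝ) × V3) =
      (Prod.map Prod.swap id) ∘ ⇑(MeasurableEquiv.prodAssoc.symm :
        (ℝ × (ℝ × V3)) ≃ᵐ ((ℝ × ℝ) × V3)) := rfl
  rw [pi3, this]
  exact h2.comp h1

noncomputable def e2 : (ℝ × (ℝ × V3)) ≃ᵐ ((ℝ × ℝ) × V3) :=
  MeasurableEquiv.prodAssoc.symm

lemma e2_apply (p : ℝ × (ℝ × V3)) : e2 p = ((p.1, p.2.1), p.2.2) := rfl

lemma e2_mp : MeasurePreserving e2 (m1.prod (m1.prod volume)) pi3 := by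
  rw [pi3, e2]
  exact (measurePreserving_prodAssoc m1 m1 volume).symm MeasurableEquiv.prodAssoc

lemma slice1 {k : ((ℝ × ℝ) × V3) → ℝ≥0∞} (hk : AEMeasurable k pi3) :
    ∀ᵐ x₂ ∂m1, AEMeasurable (fun sv : ℝ × V3 => k ((sv.1, x₂), sv.2)) (m1.prod volume) := by
  have hke : AEMeasurable (fun p => k (e1 p)) (m1.prod (m1.prod volume)) :=
    hk.comp_quasiMeasurePreserving e1_mp.quasiMeasurePreserving
  exact ae_ae_slice hke

lemma lint1 {k : ((ℝ × ℝ) × V3) → ℝ≥0∞} (hk : AEMeasurable k pi3) :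
    ∫⁻ x₂, ∫⁻ sv : ℝ × V3, k ((sv.1, x₂), sv.2) ∂(m1.prod volume) ∂m1 = ∫⁻ q, k q ∂pi3 := by
  rw [← e1_mp.lintegral_comp_emb e1.measurableEmbedding k]
  have hke : AEMeasurable (fun p => k (e1 p)) (m1.prod (m1.prod volume)) :=
    hk.comp_quasiMeasurePreserving e1_mp.quasiMeasurePreserving
  exact (lintegral_prod _ hke).symm

lemma slice2 {k : ((ℝ × ℝ) × V3) → ℝ≥0∞} (hk : AEMeasurable k pi3) :
    ∀ᵐ x₁ ∂m1, AEMeasurable (fun sv : ℝ × V3 => k ((x₁, sv.1), sv.2)) (m1.prod volume) := by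
  have hke : AEMeasurable (fun p => k (e2 p)) (m1.prod (m1.prod volume)) :=
    hk.comp_quasiMeasurePreserving e2_mp.quasiMeasurePreserving
  exact ae_ae_slice hke

lemma lint2 {k : ((ℝ × ℝ) × V3) → ℝ≥0∞} (hk : AEMeasurable k pi3) :
    ∫⁻ x₁, ∫⁻ sv : ℝ × V3, k ((x₁, sv.1), sv.2) ∂(m1.prod volume) ∂m1 = ∫⁻ q, k q ∂pi3 := by
  rw [← e2_mp.lintegral_comp_emb e2.measurableEmbedding k]
  have hke : AEMeasurable (fun p => k (e2 p)) (m1.prod (m1.prod volume)) :=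
    hk.comp_quasiMeasurePreserving e2_mp.quasiMeasurePreserving
  exact (lintegral_prod _ hke).symm

noncomputable def Ff (f : (ℝ × ℝ) → V3 → ℝ) : ((ℝ × ℝ) × V3) → ℝ≥0∞ :=
  fun q => (‖f q.1 q.2‖₊ : ℝ≥0∞)

noncomputable def Nn (f : (ℝ × ℝ) → V3 → ℝ) : ((ℝ × ℝ) × V3) → ℝ≥0∞ :=
  fun q => (‖(‖fderiv ℝ (fun x => f x q.2) q.1‖ : ℝ)‖₊ : ℝ≥0∞)

noncomputable def Psi (f : (ℝ × ℝ) → V3 → ℝ) : ((ℝ × ℝ) × V3) → ℝ≥0∞ :=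
  fun q => Ff f q * Nn f q

noncomputable def Gg (f : (ℝ × ℝ) → V3 → ℝ) : ℝ × ℝ → ℝ≥0∞ :=
  fun x => ∫⁻ v, Ff f (x, v) ^ (2:ℝ)

lemma key1 (f : (ℝ × ℝ) → V3 → ℝ) (hC1 : ∀ v, ContDiff ℝ 1 (fun x => f x v))
    (hΨm : AEMeasurable (Psi f) pi3) :
    ∀ᵐ x₂ ∂m1, ∀ x₁ ∈ Set.Icc (0:ℝ) 1,
      Gg f (x₁, x₂) ≤ (∫⁻ t, Gg f (t, x₂) ∂m1)
        + 2 * ∫⁻ sv : ℝ × V3, Psi f ((sv.1, x₂), sv.2) ∂(m1.prod volume) := by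
  filter_upwards [slice1 hΨm] with x₂ hsl
  intro x₁ hx₁
  set I := ∫⁻ sv : ℝ × V3, Psi f ((sv.1, x₂), sv.2) ∂(m1.prod volume) with hIdef
  have h2 : AEMeasurable (fun sv : ℝ × V3 => 2 * Psi f ((sv.1, x₂), sv.2)) (m1.prod volume) :=
    aemeasurable_const.mul hsl
  have stepa : ∀ t ∈ Set.Icc (0:ℝ) 1, Gg f (x₁, x₂) ≤ Gg f (t, x₂) + 2 * I := by
    intro t ht
    have point : ∀ v : V3, Ff f ((x₁, x₂), v) ^ (2:ℝ) ≤ Ff f ((t, x₂), v) ^ (2:ℝ)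
        + ∫⁻ s, 2 * Psi f ((s, x₂), v) ∂m1 := by
      intro v
      have h := pt2_fst (hC1 v) hx₁ ht (x₂ := x₂)
      simpa [Ff, Psi, Nn, m1, mul_assoc] using h
    have hR : AEMeasurable (fun v : V3 => ∫⁻ s, 2 * Psi f ((s, x₂), v) ∂m1) volume :=
      aemeas_lintegral_left h2
    calc Gg f (x₁, x₂) = ∫⁻ v, Ff f ((x₁, x₂), v) ^ (2:ℝ) := rfl
      _ ≤ ∫⁻ v, (Ff f ((t, x₂), v) ^ (2:ℝ) + ∫⁻ s, 2 * Psi f ((s, x₂), v) ∂m1) :=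
          lintegral_mono fun v => point v
      _ = Gg f (t, x₂) + ∫⁻ v, ∫⁻ s, 2 * Psi f ((s, x₂), v) ∂m1 :=
          lintegral_add_right' _ hR
      _ = Gg f (t, x₂) + 2 * I := by
          have hs := lintegral_prod_symm (fun sv : ℝ × V3 => 2 * Psi f ((sv.1, x₂), sv.2)) h2
          congr 1
          rw [← hs, lintegral_const_mul' 2 _ (by norm_num)]
  have hae : ∀ᵐ t ∂m1, Gg f (x₁, x₂) ≤ Gg f (t, x₂) + 2 * I := by
    have hmem : ∀ᵐ t ∂m1, t ∈ Set.Icc (0:ℝ) 1 := by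
      rw [m1]; exact ae_restrict_mem measurableSet_Icc
    filter_upwards [hmem] with t ht using stepa t ht
  calc Gg f (x₁, x₂) = ∫⁻ _, Gg f (x₁, x₂) ∂m1 := by
        rw [lintegral_const, m1_univ, mul_one]
    _ ≤ ∫⁻ t, (Gg f (t, x₂) + 2 * I) ∂m1 := lintegral_mono_ae hae
    _ = (∫⁻ t, Gg f (t, x₂) ∂m1) + 2 * I := by
        rw [lintegral_add_right _ measurable_const, lintegral_const, m1_univ, mul_one]

lemma key2 (f : (ℝ × ℝ) → V3 → ℝ) (hC1 : ∀ v, ContDiff ℝ 1 (fun x => f x v))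
    (hΨm : AEMeasurable (Psi f) pi3) :
    ∀ᵐ x₁ ∂m1, ∀ x₂ ∈ Set.Icc (0:ℝ) 1,
      Gg f (x₁, x₂) ≤ (∫⁻ t, Gg f (x₁, t) ∂m1)
        + 2 * ∫⁻ sv : ℝ × V3, Psi f ((x₁, sv.1), sv.2) ∂(m1.prod volume) := by
  filter_upwards [slice2 hΨm] with x₁ hsl
  intro x₂ hx₂
  set I := ∫⁻ sv : ℝ × V3, Psi f ((x₁, sv.1), sv.2) ∂(m1.prod volume) with hIdef
  have h2 : AEMeasurable (fun sv : ℝ × V3 => 2 * Psi f ((x₁, sv.1), sv.2)) (m1.prod volume) :=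
    aemeasurable_const.mul hsl
  have stepa : ∀ t ∈ Set.Icc (0:ℝ) 1, Gg f (x₁, x₂) ≤ Gg f (x₁, t) + 2 * I := by
    intro t ht
    have point : ∀ v : V3, Ff f ((x₁, x₂), v) ^ (2:ℝ) ≤ Ff f ((x₁, t), v) ^ (2:ℝ)
        + ∫⁻ s, 2 * Psi f ((x₁, s), v) ∂m1 := by
      intro v
      have h := pt2_snd (hC1 v) hx₂ ht (x₁ := x₁)
      simpa [Ff, Psi, Nn, m1, mul_assoc] using h
    have hR : AEMeasurable (fun v : V3 => ∫⁻ s, 2 * Psi f ((x₁, s), v) ∂m1) volume :=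
      aemeas_lintegral_left h2
    calc Gg f (x₁, x₂) = ∫⁻ v, Ff f ((x₁, x₂), v) ^ (2:ℝ) := rfl
      _ ≤ ∫⁻ v, (Ff f ((x₁, t), v) ^ (2:ℝ) + ∫⁻ s, 2 * Psi f ((x₁, s), v) ∂m1) :=
          lintegral_mono fun v => point v
      _ = Gg f (x₁, t) + ∫⁻ v, ∫⁻ s, 2 * Psi f ((x₁, s), v) ∂m1 :=
          lintegral_add_right' _ hR
      _ = Gg f (x₁, t) + 2 * I := by
          have hs := lintegral_prod_symm (fun sv : ℝ × V3 => 2 * Psi f ((x₁, sv.1), sv.2)) h2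
          congr 1
          rw [← hs, lintegral_const_mul' 2 _ (by norm_num)]
  have hae : ∀ᵐ t ∂m1, Gg f (x₁, x₂) ≤ Gg f (x₁, t) + 2 * I := by
    have hmem : ∀ᵐ t ∂m1, t ∈ Set.Icc (0:ℝ) 1 := by
      rw [m1]; exact ae_restrict_mem measurableSet_Icc
    filter_upwards [hmem] with t ht using stepa t ht
  calc Gg f (x₁, x₂) = ∫⁻ _, Gg f (x₁, x₂) ∂m1 := by
        rw [lintegral_const, m1_univ, mul_one]
    _ ≤ ∫⁻ t, (Gg f (x₁, t) + 2 * I) ∂m1 := lintegral_mono_ae hae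
    _ = (∫⁻ t, Gg f (x₁, t) ∂m1) + 2 * I := by
        rw [lintegral_add_right _ measurable_const, lintegral_const, m1_univ, mul_one]

noncomputable def Mf1 (f : (ℝ × ℝ) → V3 → ℝ) : ℝ → ℝ≥0∞ := fun x₂ =>
  (∫⁻ t, Gg f (t, x₂) ∂m1) + 2 * ∫⁻ sv : ℝ × V3, Psi f ((sv.1, x₂), sv.2) ∂(m1.prod volume)

noncomputable def Mf2 (f : (ℝ × ℝ) → V3 → ℝ) : ℝ → ℝ≥0∞ := fun x₁ =>
  (∫⁻ t, Gg f (x₁, t) ∂m1) + 2 * ∫⁻ sv : ℝ × V3, Psi f ((x₁, sv.1), sv.2) ∂(m1.prod volume)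

lemma conj22 : Real.HolderConjugate 2 2 := Real.HolderConjugate.two_two

lemma csPsi (f : (ℝ × ℝ) → V3 → ℝ) (hFm : AEMeasurable (Ff f) pi3)
    (hNm : AEMeasurable (Nn f) pi3) :
    ∫⁻ q, Psi f q ∂pi3 ≤ (∫⁻ q, Ff f q ^ (2:ℝ) ∂pi3) ^ ((1:ℝ)/2)
      * (∫⁻ q, Nn f q ^ (2:ℝ) ∂pi3) ^ ((1:ℝ)/2) :=
  ENNReal.lintegral_mul_le_Lp_mul_Lq pi3 conj22 hFm hNm

lemma hGm_of (f : (ℝ × ℝ) → V3 → ℝ) (hFm : AEMeasurable (Ff f) pi3) :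
    AEMeasurable (Gg f) (m1.prod m1) :=
  aemeas_lintegral_right (hFm.pow_const (2:ℝ))

lemma intM1 (f : (ℝ × ℝ) → V3 → ℝ) (hFm : AEMeasurable (Ff f) pi3)
    (hNm : AEMeasurable (Nn f) pi3) :
    ∫⁻ x₂, Mf1 f x₂ ∂m1 ≤ (∫⁻ q, Ff f q ^ (2:ℝ) ∂pi3)
      + 2 * ((∫⁻ q, Ff f q ^ (2:ℝ) ∂pi3) ^ ((1:ℝ)/2)
        * (∫⁻ q, Nn f q ^ (2:ℝ) ∂pi3) ^ ((1:ℝ)/2)) := by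
  have hΨm : AEMeasurable (Psi f) pi3 := hFm.mul hNm
  have hGm := hGm_of f hFm
  have hT2m : AEMeasurable
      (fun x₂ => ∫⁻ sv : ℝ × V3, Psi f ((sv.1, x₂), sv.2) ∂(m1.prod volume)) m1 := by
    have hke : AEMeasurable (fun p => Psi f (e1 p)) (m1.prod (m1.prod volume)) :=
      hΨm.comp_quasiMeasurePreserving e1_mp.quasiMeasurePreserving
    exact aemeas_lintegral_right hke
  have hsplit : ∫⁻ x₂, Mf1 f x₂ ∂m1 = (∫⁻ x₂, ∫⁻ t, Gg f (t, x₂) ∂m1 ∂m1)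
      + 2 * ∫⁻ x₂, ∫⁻ sv : ℝ × V3, Psi f ((sv.1, x₂), sv.2) ∂(m1.prod volume) ∂m1 := by
    simp only [Mf1]
    rw [lintegral_add_right' _ (hT2m.const_mul 2),
      lintegral_const_mul' 2 _ (by norm_num)]
  rw [hsplit]
  have hT1 : (∫⁻ x₂, ∫⁻ t, Gg f (t, x₂) ∂m1 ∂m1) = ∫⁻ q, Ff f q ^ (2:ℝ) ∂pi3 := by
    rw [← lintegral_prod_symm _ hGm, pi3, lintegral_prod _ (hFm.pow_const (2:ℝ))]
    rfl
  rw [hT1, lint1 hΨm]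
  gcongr
  exact csPsi f hFm hNm

lemma intM2 (f : (ℝ × ℝ) → V3 → ℝ) (hFm : AEMeasurable (Ff f) pi3)
    (hNm : AEMeasurable (Nn f) pi3) :
    ∫⁻ x₁, Mf2 f x₁ ∂m1 ≤ (∫⁻ q, Ff f q ^ (2:ℝ) ∂pi3)
      + 2 * ((∫⁻ q, Ff f q ^ (2:ℝ) ∂pi3) ^ ((1:ℝ)/2)
        * (∫⁻ q, Nn f q ^ (2:ℝ) ∂pi3) ^ ((1:ℝ)/2)) := by
  have hΨm : AEMeasurable (Psi f) pi3 := hFm.mul hNm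
  have hGm := hGm_of f hFm
  have hT2m : AEMeasurable
      (fun x₁ => ∫⁻ sv : ℝ × V3, Psi f ((x₁, sv.1), sv.2) ∂(m1.prod volume)) m1 := by
    have hke : AEMeasurable (fun p => Psi f (e2 p)) (m1.prod (m1.prod volume)) :=
      hΨm.comp_quasiMeasurePreserving e2_mp.quasiMeasurePreserving
    exact aemeas_lintegral_right hke
  have hsplit : ∫⁻ x₁, Mf2 f x₁ ∂m1 = (∫⁻ x₁, ∫⁻ t, Gg f (x₁, t) ∂m1 ∂m1)
      + 2 * ∫⁻ x₁, ∫⁻ sv : ℝ × V3, Psi f ((x₁, sv.1), sv.2) ∂(m1.prod volume) ∂m1 := by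
    simp only [Mf2]
    rw [lintegral_add_right' _ (hT2m.const_mul 2),
      lintegral_const_mul' 2 _ (by norm_num)]
  rw [hsplit]
  have hT1 : (∫⁻ x₁, ∫⁻ t, Gg f (x₁, t) ∂m1 ∂m1) = ∫⁻ q, Ff f q ^ (2:ℝ) ∂pi3 := by
    rw [← lintegral_prod _ hGm, pi3, lintegral_prod _ (hFm.pow_const (2:ℝ))]
    rfl
  rw [hT1, lint2 hΨm]
  gcongr
  exact csPsi f hFm hNm

lemma enn_sq (y : ℝ≥0∞) : y ^ (2:ℝ) = y * y := by
  rw [show (2:ℝ) = ((2:ℕ):ℝ) by norm_num, ENNReal.rpow_natCast, pow_two]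

lemma hMf1m_of (f : (ℝ × ℝ) → V3 → ℝ) (hFm : AEMeasurable (Ff f) pi3)
    (hNm : AEMeasurable (Nn f) pi3) : AEMeasurable (Mf1 f) m1 := by
  have hΨm : AEMeasurable (Psi f) pi3 := hFm.mul hNm
  have hke : AEMeasurable (fun p => Psi f (e1 p)) (m1.prod (m1.prod volume)) :=
    hΨm.comp_quasiMeasurePreserving e1_mp.quasiMeasurePreserving
  exact (aemeas_lintegral_left (hGm_of f hFm)).add
    (aemeasurable_const.mul (aemeas_lintegral_right hke))

lemma hMf2m_of (f : (ℝ × ℝ) → V3 → ℝ) (hFm : AEMeasurable (Ff f) pi3)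
    (hNm : AEMeasurable (Nn f) pi3) : AEMeasurable (Mf2 f) m1 := by
  have hΨm : AEMeasurable (Psi f) pi3 := hFm.mul hNm
  have hke : AEMeasurable (fun p => Psi f (e2 p)) (m1.prod (m1.prod volume)) :=
    hΨm.comp_quasiMeasurePreserving e2_mp.quasiMeasurePreserving
  exact (aemeas_lintegral_right (hGm_of f hFm)).add
    (aemeasurable_const.mul (aemeas_lintegral_right hke))

lemma combined (f : (ℝ × ℝ) → V3 → ℝ) (hC1 : ∀ v, ContDiff ℝ 1 (fun x => f x v))
    (hFm : AEMeasurable (Ff f) pi3) (hNm : AEMeasurable (Nn f) pi3) :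
    ∫⁻ x, Gg f x ^ (2:ℝ) ∂(m1.prod m1)
      ≤ (∫⁻ x₂, Mf1 f x₂ ∂m1) * (∫⁻ x₁, Mf2 f x₁ ∂m1) := by
  have hΨm : AEMeasurable (Psi f) pi3 := hFm.mul hNm
  have hmem : ∀ᵐ t ∂m1, t ∈ Set.Icc (0:ℝ) 1 := by
    rw [m1]; exact ae_restrict_mem measurableSet_Icc
  have hGM : ∀ᵐ x ∂(m1.prod m1), Gg f x ^ (2:ℝ) ≤ Mf2 f x.1 * Mf1 f x.2 := by
    filter_upwards [ae_snd' m1 m1 (key1 f hC1 hΨm), ae_fst' m1 m1 (key2 f hC1 hΨm),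
      ae_fst' m1 m1 hmem, ae_snd' m1 m1 hmem] with x h1 h2 hm1 hm2
    have hb1 : Gg f x ≤ Mf1 f x.2 := by
      have := h1 x.1 hm1
      simpa [Mf1] using this
    have hb2 : Gg f x ≤ Mf2 f x.1 := by
      have := h2 x.2 hm2
      simpa [Mf2] using this
    rw [enn_sq]
    exact mul_le_mul' hb2 hb1
  calc ∫⁻ x, Gg f x ^ (2:ℝ) ∂(m1.prod m1)
      ≤ ∫⁻ x, Mf2 f x.1 * Mf1 f x.2 ∂(m1.prod m1) := lintegral_mono_ae hGM
    _ = (∫⁻ x₁, Mf2 f x₁ ∂m1) * (∫⁻ x₂, Mf1 f x₂ ∂m1) :=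
        lintegral_prod_mul (hMf2m_of f hFm hNm) (hMf1m_of f hFm hNm)
    _ = (∫⁻ x₂, Mf1 f x₂ ∂m1) * (∫⁻ x₁, Mf2 f x₁ ∂m1) := mul_comm _ _


/-- anisotropic Ladyzhenskaya inequality
`‖f‖_{L⁴_x L²_v} ≤ C ‖f‖_{L²}^{1/2} (‖f‖_{L²} + ‖∇_x f‖_{L²})^{1/2}` on `𝕋² × ℝ³`. -/
theorem stmt6 :
    ∃ C : ℝ, 0 < C ∧
      ∀ f : (ℝ × ℝ) → (ℝ × ℝ × ℝ) → ℝ,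
        (∀ v, ContDiff ℝ 1 (fun x => f x v)) →
        (∀ v, ZZper (fun x => f x v)) →
        MemLp (fun q : (ℝ × ℝ) × (ℝ × ℝ × ℝ) => f q.1 q.2) 2 (μT.prod volume) →
        MemLp (fun q : (ℝ × ℝ) × (ℝ × ℝ × ℝ) => ‖fderiv ℝ (fun x => f x q.2) q.1‖) 2
          (μT.prod volume) →
        eLpNorm (fun x => (eLpNorm (fun v => f x v) 2 (volume : Measure (ℝ × ℝ × ℝ))).toReal) 4 μT
          ≤ ENNReal.ofReal C *
              (eLpNorm (fun q : (ℝ × ℝ) × (ℝ × ℝ × ℝ) => f q.1 q.2) 2 (μT.prod volume))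
                ^ ((1:ℝ)/2) *
              (eLpNorm (fun q : (ℝ × ℝ) × (ℝ × ℝ × ℝ) => f q.1 q.2) 2 (μT.prod volume) +
                eLpNorm (fun q : (ℝ × ℝ) × (ℝ × ℝ × ℝ) => ‖fderiv ℝ (fun x => f x q.2) q.1‖) 2
                  (μT.prod volume)) ^ ((1:ℝ)/2) := by
  refine ⟨2, two_pos, ?_⟩
  intro f hC1 _hper hf2 hN2
  rw [muT_eq'] at hf2 hN2 ⊢
  have hFm : AEMeasurable (Ff f) pi3 := hf2.aestronglyMeasurable.enorm
  have hNm : AEMeasurable (Nn f) pi3 := hN2.aestronglyMeasurable.enorm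
  have hA : eLpNorm (fun q : (ℝ × ℝ) × (ℝ × ℝ × ℝ) => f q.1 q.2) 2 ((m1.prod m1).prod volume)
      = (∫⁻ q, Ff f q ^ (2:ℝ) ∂pi3) ^ ((1:ℝ)/2) := by
    rw [eLpNorm_eq_lintegral_rpow_nnnorm (by norm_num) (by norm_num)]
    norm_num [Ff, pi3]
  have hB : eLpNorm (fun q : (ℝ × ℝ) × (ℝ × ℝ × ℝ) => ‖fderiv ℝ (fun x => f x q.2) q.1‖) 2
      ((m1.prod m1).prod volume) = (∫⁻ q, Nn f q ^ (2:ℝ) ∂pi3) ^ ((1:ℝ)/2) := by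
    rw [eLpNorm_eq_lintegral_rpow_nnnorm (by norm_num) (by norm_num)]
    norm_num [Nn, pi3]
  have hIAfin : (∫⁻ q, Ff f q ^ (2:ℝ) ∂pi3) ≠ ⊤ := by
    intro h
    have h2 := hf2.eLpNorm_lt_top
    rw [hA, h, ENNReal.top_rpow_of_pos (by norm_num)] at h2
    exact lt_irrefl _ h2
  have hGm := hGm_of f hFm
  have hGint : ∫⁻ x, Gg f x ∂(m1.prod m1) = ∫⁻ q, Ff f q ^ (2:ℝ) ∂pi3 := by
    rw [pi3, lintegral_prod _ (hFm.pow_const (2:ℝ))]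
    rfl
  have hGfin : ∀ᵐ x ∂(m1.prod m1), Gg f x < ⊤ := by
    refine ae_lt_top' hGm ?_
    rw [hGint]; exact hIAfin
  have hLHS : eLpNorm (fun x => (eLpNorm (fun v => f x v) 2
        (volume : Measure (ℝ × ℝ × ℝ))).toReal) 4 (m1.prod m1)
      = (∫⁻ x, Gg f x ^ (2:ℝ) ∂(m1.prod m1)) ^ ((1:ℝ)/4) := by
    rw [eLpNorm_eq_lintegral_rpow_nnnorm (by norm_num) (by norm_num)]
    have hint : ∫⁻ x, (‖(eLpNorm (fun v => f x v) 2
          (volume : Measure (ℝ × ℝ × ℝ))).toReal‖₊ : ℝ≥0∞) ^ ((4:ℝ≥0∞).toReal) ∂(m1.prod m1)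
        = ∫⁻ x, Gg f x ^ (2:ℝ) ∂(m1.prod m1) := by
      apply lintegral_congr_ae
      filter_upwards [hGfin] with x hx
      have h1 : eLpNorm (fun v => f x v) 2 (volume : Measure (ℝ × ℝ × ℝ))
          = Gg f x ^ ((1:ℝ)/2) := by
        rw [eLpNorm_eq_lintegral_rpow_nnnorm (by norm_num) (by norm_num)]
        norm_num [Gg, Ff]
      rw [h1]
      have hne : Gg f x ^ ((1:ℝ)/2) ≠ ⊤ := ENNReal.rpow_ne_top_of_nonneg (by norm_num) hx.ne
      rw [← ofReal_norm_eq_coe_nnnorm, Real.norm_eq_abs, abs_of_nonneg ENNReal.toReal_nonneg,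
        ENNReal.ofReal_toReal hne, ← ENNReal.rpow_mul]
      norm_num
    rw [hint]
    norm_num
  rw [hLHS, hA, hB]
  set IA := ∫⁻ q, Ff f q ^ (2:ℝ) ∂pi3 with hIAdef
  set IB := ∫⁻ q, Nn f q ^ (2:ℝ) ∂pi3 with hIBdef
  set a := IA ^ ((1:ℝ)/2) with hadef
  set b := IB ^ ((1:ℝ)/2) with hbdef
  have ha2 : a * a = IA := by
    rw [hadef, ← enn_sq, ← ENNReal.rpow_mul]
    norm_num
  have hD : IA + 2 * (a * b) ≤ 2 * (a * (a + b)) := by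
    calc IA + 2 * (a * b) = a * a + 2 * (a * b) := by rw [ha2]
      _ ≤ 2 * (a * a) + 2 * (a * b) :=
          add_le_add_left (le_mul_of_one_le_left zero_le one_le_two) _
      _ = 2 * (a * (a + b)) := by rw [mul_add a, mul_add]
  have h1 := (intM1 f hFm hNm).trans hD
  have h2 := (intM2 f hFm hNm).trans hD
  have hL : ∫⁻ x, Gg f x ^ (2:ℝ) ∂(m1.prod m1)
      ≤ (2 * (a * (a + b))) * (2 * (a * (a + b))) :=
    (combined f hC1 hFm hNm).trans (mul_le_mul' h1 h2)
  calc (∫⁻ x, Gg f x ^ (2:ℝ) ∂(m1.prod m1)) ^ ((1:ℝ)/4)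
      ≤ ((2 * (a * (a + b))) * (2 * (a * (a + b)))) ^ ((1:ℝ)/4) :=
        ENNReal.rpow_le_rpow hL (by norm_num)
    _ = (2 * (a * (a + b))) ^ ((1:ℝ)/2) := by
        rw [← enn_sq (2 * (a * (a + b))), ← ENNReal.rpow_mul]
        norm_num
    _ = (2:ℝ≥0∞) ^ ((1:ℝ)/2) * (a ^ ((1:ℝ)/2) * (a + b) ^ ((1:ℝ)/2)) := by
        rw [ENNReal.mul_rpow_of_nonneg _ _ (by norm_num),
          ENNReal.mul_rpow_of_nonneg _ _ (by norm_num)]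
    _ ≤ (2:ℝ≥0∞) * (a ^ ((1:ℝ)/2) * (a + b) ^ ((1:ℝ)/2)) := by
        gcongr
        calc (2:ℝ≥0∞) ^ ((1:ℝ)/2) ≤ (2:ℝ≥0∞) ^ (1:ℝ) :=
              ENNReal.rpow_le_rpow_of_exponent_le (by norm_num) (by norm_num)
          _ = 2 := ENNReal.rpow_one 2
    _ = ENNReal.ofReal 2 * a ^ ((1:ℝ)/2) * (a + b) ^ ((1:ℝ)/2) := by
        rw [ENNReal.ofReal_ofNat, mul_assoc]
end
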